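/- Let ψ solve the Feynman–Kac representation E(0,g) = ∫_{B(0,T)} exp( g ∫₀^T S(x(τ),τ)² dτ ) dP_W[x(·)] where P_W is a probability measure on paths and S is measurable. Let M = sup over paths x(·) in the support and times t ∈ [0,T] of S(x(t),t)², assumed finite a.s. Then E(0,g) ≤ exp(g T M). Consequently, if M has probability density p_M(m) with upper tail p_M(m) ∼ A m^{1/2} e^{−m/2} as m → ∞ for some constant A > 0, then E[E(0,g)^ε] ≤ ∫₀^∞ p_M(m) e^{ε g T m} dm < ∞ for every ε with 0 < ε < 1/(2gT). -/

import Mathlib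

open MeasureTheory ENNReal Filter

/-- Lemma 2 combined with equation (52): the Feynman–Kac solution is bounded by
`exp(gTM)` where `M` is the supremum of `S²` along paths, and if `M` has a pdf
with tail `A m^(1/2) e^(-m/2)`, then all fractional moments of order
`ε < 1/(2gT)` are finite. -/
theorem stmt13 {Ω : Type*} [MeasureSpace Ω] [IsProbabilityMeasure (volume : Measure Ω)]
    {X : Type*} [MeasurableSpace X] (PW : Measure X) [IsProbabilityMeasure PW]
    (g T : ℝ) (hg : 0 < g) (hT : 0 < T)
    (x : X → ℝ → ℝ) (S : Ω → ℝ → ℝ → ℝ)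
    (E0 : Ω → ℝ≥0∞)
    (hE0 : ∀ ω, E0 ω = ∫⁻ p, ENNReal.ofReal
      (Real.exp (g * ∫ τ in (0 : ℝ)..T, (S ω (x p τ) τ) ^ 2)) ∂PW)
    (M : Ω → ℝ) (hMmeas : Measurable M) (hMpos : ∀ ω, 0 ≤ M ω)
    (hM : ∀ ω, ∀ p : X, ∀ τ ∈ Set.Icc (0 : ℝ) T, (S ω (x p τ) τ) ^ 2 ≤ M ω)
    (pM : ℝ → ℝ) (hpMmeas : Measurable pM) (hpMpos : ∀ m, 0 ≤ pM m)
    (hlaw : Measure.map M (volume : Measure Ω) =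
      volume.withDensity fun m => ENNReal.ofReal (pM m))
    (A : ℝ) (hA : 0 < A)
    (htail : Tendsto (fun m : ℝ =>
      pM m / (A * Real.sqrt m * Real.exp (-(m / 2)))) atTop (nhds 1)) :
    (∀ ω, E0 ω ≤ ENNReal.ofReal (Real.exp (g * T * M ω))) ∧
    (∀ ε : ℝ, 0 < ε → ε < 1 / (2 * g * T) →
      (∫⁻ ω, (E0 ω) ^ ε ∂(volume : Measure Ω)) ≤
        (∫⁻ m in Set.Ioi (0 : ℝ),
          ENNReal.ofReal (pM m * Real.exp (ε * g * T * m))) ∧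
      (∫⁻ m in Set.Ioi (0 : ℝ),
          ENNReal.ofReal (pM m * Real.exp (ε * g * T * m))) < ⊤) := by
  have h1 : ∀ ω, E0 ω ≤ ENNReal.ofReal (Real.exp (g * T * M ω)) := by
    intro ω
    rw [hE0]
    calc ∫⁻ p, ENNReal.ofReal
          (Real.exp (g * ∫ τ in (0 : ℝ)..T, (S ω (x p τ) τ) ^ 2)) ∂PW
        ≤ ∫⁻ _, ENNReal.ofReal (Real.exp (g * T * M ω)) ∂PW := by
          apply lintegral_mono
          intro p
          apply ENNReal.ofReal_le_ofReal
          apply Real.exp_le_exp.2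
          rw [mul_assoc]
          apply mul_le_mul_of_nonneg_left _ hg.le
          by_cases hint : IntervalIntegrable (fun τ => (S ω (x p τ) τ) ^ 2) volume 0 T
          · calc ∫ τ in (0 : ℝ)..T, (S ω (x p τ) τ) ^ 2
                ≤ ∫ _ in (0 : ℝ)..T, M ω := by
                  apply intervalIntegral.integral_mono_on hT.le hint
                    intervalIntegrable_const
                  exact fun τ hτ => hM ω p τ hτ
              _ = T * M ω := by simp [mul_comm]
          · rw [intervalIntegral.integral_undef hint]
            have := hMpos ω
            positivity
      _ = ENNReal.ofReal (Real.exp (g * T * M ω)) := by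
          simp
  refine ⟨h1, ?_⟩
  intro ε hε hεlt
  set c : ℝ := ε * g * T with hc
  have hc0 : 0 < c := by positivity
  have hchalf : c < 1 / 2 := by
    have h2gT : 0 < 2 * g * T := by positivity
    rw [lt_div_iff₀ h2gT] at hεlt
    nlinarith
  set δ : ℝ := 1 / 2 - c with hδ
  have hδ0 : 0 < δ := by simp only [hδ]; linarith
  -- the key identity: the ω-integral of exp(c M ω) equals the m-integral of pM m exp(c m)
  have hmeas_exp : Measurable fun m : ℝ => ENNReal.ofReal (Real.exp (c * m)) := by
    fun_prop
  have hmeas_pM : Measurable fun m : ℝ => ENNReal.ofReal (pM m) := by fun_prop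
  -- pM vanishes a.e. on Iic 0
  have hnull : (volume.withDensity fun m => ENNReal.ofReal (pM m)) (Set.Iio 0) = 0 := by
    rw [← hlaw, Measure.map_apply hMmeas measurableSet_Iio]
    have : M ⁻¹' Set.Iio 0 = ∅ := by
      ext ω; simp [not_lt, hMpos ω]
    simp [this]
  have hpM_ae : ∀ᵐ m ∂(volume : Measure ℝ).restrict (Set.Iic 0), pM m = 0 := by
    rw [← Measure.restrict_congr_set (Iio_ae_eq_Iic (a := (0:ℝ)))]
    have h0 : ∫⁻ m in Set.Iio (0:ℝ), ENNReal.ofReal (pM m) = 0 := by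
      rw [← withDensity_apply _ measurableSet_Iio]; exact hnull
    have := (lintegral_eq_zero_iff (hmeas_pM)).1 h0
    filter_upwards [this] with m hm
    have := hpMpos m
    simpa [ENNReal.ofReal_eq_zero] using le_antisymm (by simpa [ENNReal.ofReal_eq_zero] using hm) this
  have hIic : ∫⁻ m in Set.Iic (0:ℝ), ENNReal.ofReal (pM m * Real.exp (c * m)) = 0 := by
    rw [lintegral_congr_ae (g := fun _ => 0) ?_, lintegral_zero]
    filter_upwards [hpM_ae] with m hm
    simp [hm]
  have key : (∫⁻ ω, (E0 ω) ^ ε ∂(volume : Measure Ω)) ≤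
      ∫⁻ m in Set.Ioi (0 : ℝ), ENNReal.ofReal (pM m * Real.exp (c * m)) := by
    calc ∫⁻ ω, (E0 ω) ^ ε ∂(volume : Measure Ω)
        ≤ ∫⁻ ω, ENNReal.ofReal (Real.exp (c * M ω)) ∂(volume : Measure Ω) := by
          apply lintegral_mono
          intro ω
          calc (E0 ω) ^ ε ≤ (ENNReal.ofReal (Real.exp (g * T * M ω))) ^ ε :=
                ENNReal.rpow_le_rpow (h1 ω) hε.le
            _ = ENNReal.ofReal (Real.exp (c * M ω)) := by
                rw [ENNReal.ofReal_rpow_of_pos (Real.exp_pos _), ← Real.exp_mul]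
                rw [hc]
                ring_nf
      _ = ∫⁻ m, ENNReal.ofReal (Real.exp (c * m)) ∂(Measure.map M volume) :=
          (lintegral_map hmeas_exp hMmeas).symm
      _ = ∫⁻ m, ENNReal.ofReal (pM m) * ENNReal.ofReal (Real.exp (c * m)) := by
          rw [hlaw, lintegral_withDensity_eq_lintegral_mul _ (by fun_prop) hmeas_exp]
          rfl
      _ = ∫⁻ m, ENNReal.ofReal (pM m * Real.exp (c * m)) := by
          congr 1; ext m; rw [ENNReal.ofReal_mul (hpMpos m)]
      _ = (∫⁻ m in Set.Ioi (0:ℝ), ENNReal.ofReal (pM m * Real.exp (c * m))) +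
          (∫⁻ m in Set.Iic (0:ℝ), ENNReal.ofReal (pM m * Real.exp (c * m))) := by
          rw [← lintegral_add_compl _ measurableSet_Ioi, Set.compl_Ioi]
      _ = ∫⁻ m in Set.Ioi (0:ℝ), ENNReal.ofReal (pM m * Real.exp (c * m)) := by
          rw [hIic, add_zero]
  refine ⟨by simpa [hc, mul_assoc] using key, ?_⟩
  -- finiteness
  have hev : ∀ᶠ m in atTop, pM m ≤ 2 * (A * Real.sqrt m * Real.exp (-(m / 2))) := by
    have h2 := htail.eventually (eventually_le_nhds (by norm_num : (1:ℝ) < 2))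
    filter_upwards [h2, eventually_ge_atTop (1:ℝ)] with m hm hm1
    have hden : 0 < A * Real.sqrt m * Real.exp (-(m / 2)) :=
      mul_pos (mul_pos hA (Real.sqrt_pos.2 (by linarith))) (Real.exp_pos _)
    have h3 : pM m / (A * Real.sqrt m * Real.exp (-(m / 2))) *
        (A * Real.sqrt m * Real.exp (-(m / 2))) = pM m := by
      field_simp
    calc pM m = _ := h3.symm
      _ ≤ 2 * (A * Real.sqrt m * Real.exp (-(m / 2))) :=
          mul_le_mul_of_nonneg_right hm hden.le
  obtain ⟨m₀, hm₀⟩ := eventually_atTop.1 hev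
  set m₁ : ℝ := max m₀ 1 with hm₁
  have hm₁1 : (1:ℝ) ≤ m₁ := le_max_right _ _
  have hm₁0 : (0:ℝ) ≤ m₁ := by linarith
  have hsplit : ∫⁻ m in Set.Ioi (0:ℝ), ENNReal.ofReal (pM m * Real.exp (ε * g * T * m)) =
      (∫⁻ m in Set.Ioc (0:ℝ) m₁, ENNReal.ofReal (pM m * Real.exp (c * m))) +
      (∫⁻ m in Set.Ioi m₁, ENNReal.ofReal (pM m * Real.exp (c * m))) := by
    rw [← Set.Ioc_union_Ioi_eq_Ioi hm₁0,
      lintegral_union measurableSet_Ioi Set.Ioc_disjoint_Ioi_same]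
  rw [hsplit]
  have hpart1 : (∫⁻ m in Set.Ioc (0:ℝ) m₁, ENNReal.ofReal (pM m * Real.exp (c * m))) < ⊤ := by
    have hb : ∀ m ∈ Set.Ioc (0:ℝ) m₁, ENNReal.ofReal (pM m * Real.exp (c * m)) ≤
        ENNReal.ofReal (Real.exp (c * m₁)) * ENNReal.ofReal (pM m) := by
      intro m hm
      rw [← ENNReal.ofReal_mul (Real.exp_pos _).le]
      apply ENNReal.ofReal_le_ofReal
      rw [mul_comm (Real.exp (c * m₁))]
      apply mul_le_mul_of_nonneg_left _ (hpMpos m)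
      exact Real.exp_le_exp.2 (mul_le_mul_of_nonneg_left hm.2 hc0.le)
    calc (∫⁻ m in Set.Ioc (0:ℝ) m₁, ENNReal.ofReal (pM m * Real.exp (c * m)))
        ≤ ∫⁻ m in Set.Ioc (0:ℝ) m₁,
            ENNReal.ofReal (Real.exp (c * m₁)) * ENNReal.ofReal (pM m) :=
          setLIntegral_mono (by fun_prop) hb
      _ = ENNReal.ofReal (Real.exp (c * m₁)) *
            ∫⁻ m in Set.Ioc (0:ℝ) m₁, ENNReal.ofReal (pM m) :=
          lintegral_const_mul _ hmeas_pM
      _ ≤ ENNReal.ofReal (Real.exp (c * m₁)) * ∫⁻ m, ENNReal.ofReal (pM m) :=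
          mul_le_mul_right (setLIntegral_le_lintegral _ _) _
      _ = ENNReal.ofReal (Real.exp (c * m₁)) *
            (volume.withDensity fun m => ENNReal.ofReal (pM m)) Set.univ := by
          rw [withDensity_apply _ MeasurableSet.univ, Measure.restrict_univ]
      _ = ENNReal.ofReal (Real.exp (c * m₁)) * (Measure.map M volume) Set.univ := by
          rw [hlaw]
      _ < ⊤ := by
          have : (Measure.map M (volume : Measure Ω)) Set.univ ≤ 1 := by
            rw [Measure.map_apply hMmeas MeasurableSet.univ]
            simp
          exact lt_of_le_of_lt (mul_le_mul_right this _) (by simp [ENNReal.ofReal_lt_top])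
  have hpart2 : (∫⁻ m in Set.Ioi m₁, ENNReal.ofReal (pM m * Real.exp (c * m))) < ⊤ := by
    set K : ℝ := 2 * A * Real.sqrt (2 / δ) with hK
    have hb : ∀ m ∈ Set.Ioi m₁, ENNReal.ofReal (pM m * Real.exp (c * m)) ≤
        ENNReal.ofReal (K * Real.exp (-(δ / 2) * m)) := by
      intro m hm
      have hm1 : (1:ℝ) ≤ m := le_trans hm₁1 (le_of_lt hm)
      have hm0 : (0:ℝ) ≤ m := by linarith
      apply ENNReal.ofReal_le_ofReal
      have h4 : pM m ≤ 2 * (A * Real.sqrt m * Real.exp (-(m / 2))) :=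
        hm₀ m (le_trans (le_max_left _ _) hm.le)
      have hs : Real.sqrt m ≤ Real.sqrt (2 / δ) * Real.exp (δ / 2 * m) := by
        have h0 : Real.sqrt m = Real.sqrt (2 / δ) * Real.sqrt (δ / 2 * m) := by
          rw [← Real.sqrt_mul (by positivity)]
          congr 1
          field_simp
        rw [h0]
        apply mul_le_mul_of_nonneg_left _ (Real.sqrt_nonneg _)
        have hu0 : (0:ℝ) ≤ δ / 2 * m := by positivity
        have hsq := Real.sq_sqrt hu0
        have hnn := Real.sqrt_nonneg (δ / 2 * m)
        have h5 : Real.sqrt (δ / 2 * m) ≤ 1 + δ / 2 * m := by nlinarith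
        exact le_trans h5 (by linarith [Real.add_one_le_exp (δ / 2 * m)])
      calc pM m * Real.exp (c * m)
          ≤ 2 * (A * Real.sqrt m * Real.exp (-(m / 2))) * Real.exp (c * m) :=
            mul_le_mul_of_nonneg_right h4 (Real.exp_pos _).le
        _ ≤ 2 * (A * (Real.sqrt (2 / δ) * Real.exp (δ / 2 * m)) * Real.exp (-(m / 2))) *
              Real.exp (c * m) := by
            have hA' : 0 ≤ A := hA.le
            have he : 0 ≤ Real.exp (-(m / 2)) := (Real.exp_pos _).le
            gcongr
        _ = K * Real.exp (-(δ / 2) * m) := by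
            rw [hK, show (-(δ / 2) * m : ℝ) = δ / 2 * m + -(m / 2) + c * m by
              simp only [hδ]; ring, Real.exp_add, Real.exp_add]
            ring
    have hint : IntegrableOn (fun m => K * Real.exp (-(δ / 2) * m)) (Set.Ioi m₁) :=
      (exp_neg_integrableOn_Ioi m₁ (by positivity : (0:ℝ) < δ / 2)).const_mul K
    calc (∫⁻ m in Set.Ioi m₁, ENNReal.ofReal (pM m * Real.exp (c * m)))
        ≤ ∫⁻ m in Set.Ioi m₁, ENNReal.ofReal (K * Real.exp (-(δ / 2) * m)) :=
          setLIntegral_mono (by fun_prop) hb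
      _ < ⊤ := hint.lintegral_lt_top
  exact ENNReal.add_lt_top.2 ⟨hpart1, hpart2⟩
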